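/- Kernel-sum off-diagonal bound: let g_{r²}(t) = Σ_{k=0}^{m} C(m,k) (−1)^k χ_{{t > k r²}} / √(t − k r²) for r > 0 and integer m ≥ 1. Then for k r² < t ≤ (k+1) r² ≤ (m+1) r² one has |g_{r²}(t)| ≤ C/√(t − k r²), and for t > (m+1) r² one has |g_{r²}(t)| ≤ C r^{2m} t^{−m−1/2}, where C depends only on m. -/

import Mathlib

noncomputable def Sfun (n : ℕ) (p h t : ℝ) : ℝ :=
  ∑ k ∈ Finset.range (n + 1), (n.choose k : ℝ) * (-1) ^ k * (t - k * h) ^ p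

lemma Sfun_succ (n : ℕ) (p h t : ℝ) :
    Sfun (n + 1) p h t = Sfun n p h t - Sfun n p h (t - h) := by
  unfold Sfun
  rw [Finset.sum_range_succ' (fun k => ((n+1).choose k : ℝ) * (-1) ^ k * (t - k * h) ^ p) (n+1)]
  have e1 : ∀ k ∈ Finset.range (n+1),
      ((n+1).choose (k+1) : ℝ) * (-1) ^ (k+1) * (t - (k+1 : ℕ) * h) ^ p
      = ((n.choose (k+1) : ℝ) * (-1) ^ (k+1) * (t - (k+1 : ℕ) * h) ^ p)
        + (-((n.choose k : ℝ) * (-1) ^ k * ((t - h) - k * h) ^ p)) := by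
    intro k _
    have : ((n+1).choose (k+1) : ℝ) = (n.choose k : ℝ) + (n.choose (k+1) : ℝ) := by
      exact_mod_cast Nat.choose_succ_succ n k
    rw [this]
    have harg : t - ((k:ℝ)+1) * h = (t - h) - k * h := by ring
    push_cast
    rw [harg]
    ring
  rw [Finset.sum_congr rfl e1, Finset.sum_add_distrib, Finset.sum_neg_distrib]
  have e2 : ∑ k ∈ Finset.range (n+1), (n.choose (k+1) : ℝ) * (-1) ^ (k+1) * (t - (k+1 : ℕ) * h) ^ p
      = (∑ k ∈ Finset.range (n+1), (n.choose k : ℝ) * (-1) ^ k * (t - k * h) ^ p)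
        - (n.choose 0 : ℝ) * (-1) ^ 0 * (t - (0:ℕ) * h) ^ p := by
    rw [Finset.sum_range_succ' (fun k => (n.choose k : ℝ) * (-1) ^ k * (t - k * h) ^ p) n]
    have : (n.choose (n+1) : ℝ) * (-1) ^ (n+1) * (t - (n+1 : ℕ) * h) ^ p = 0 := by
      simp [Nat.choose_succ_self]
    rw [Finset.sum_range_succ (fun k => (n.choose (k+1) : ℝ) * (-1) ^ (k+1) * (t - (k+1:ℕ) * h) ^ p) n, this]
    push_cast
    ring
  rw [e2]
  simp
  ring

lemma Sfun_hasDerivAt (n : ℕ) (p h t : ℝ) (hh : 0 < h) (ht : (n:ℝ) * h < t) :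
    HasDerivAt (fun s => Sfun n p h s) (p * Sfun n (p-1) h t) t := by
  unfold Sfun
  rw [Finset.mul_sum]
  apply HasDerivAt.fun_sum
  intro k hk
  have hk' : (k:ℝ) ≤ n := by
    have := Finset.mem_range.mp hk
    exact_mod_cast Nat.lt_succ_iff.mp this
  have hpos : 0 < t - k * h := by nlinarith
  have d1 : HasDerivAt (fun s : ℝ => s - k * h) 1 t := (hasDerivAt_id t).sub_const _
  have d2 := (Real.hasDerivAt_rpow_const (x := t - k * h) (p := p) (Or.inl (ne_of_gt hpos))).comp t d1
  have d3 := d2.const_mul ((n.choose k : ℝ) * (-1) ^ k)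
  convert d3 using 1
  · rfl
  · rfl
  · ring

lemma keyA : ∀ (n : ℕ) (p h t : ℝ), p ≤ 0 → 0 < h → (n:ℝ) * h < t →
    |Sfun n p h t| ≤ (∏ j ∈ Finset.range n, (-p + j)) * h ^ n * (t - n * h) ^ (p - n) := by
  intro n
  induction n with
  | zero =>
    intro p h t hp hh ht
    simp only [Nat.cast_zero, zero_mul, sub_zero] at ht ⊢
    have e : Sfun 0 p h t = t ^ p := by unfold Sfun; simp
    rw [e]
    simp only [Finset.range_zero, Finset.prod_empty, pow_zero, one_mul]
    rw [abs_of_nonneg (Real.rpow_nonneg (le_of_lt ht) p)]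
  | succ n ih =>
    intro p h t hp hh ht
    rw [Sfun_succ]
    have hnh : (n:ℝ) * h < t - h := by
      have : ((n:ℝ)+1) * h < t := by push_cast at ht; linarith
      linarith
    set C₀ : ℝ := (-p) * ((∏ j ∈ Finset.range n, (-(p-1) + j)) * h ^ n * ((t - h) - n * h) ^ ((p-1) - n)) with hC₀
    have hposbase : 0 < (t - h) - n * h := by linarith
    have hder : ∀ x ∈ Set.Icc (t - h) t,
        HasDerivWithinAt (fun s => Sfun n p h s) (p * Sfun n (p-1) h x) (Set.Icc (t-h) t) x := by
      intro x hx
      exact (Sfun_hasDerivAt n p h x hh (lt_of_lt_of_le hnh hx.1)).hasDerivWithinAt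
    have hbd : ∀ x ∈ Set.Icc (t - h) t, ‖p * Sfun n (p-1) h x‖ ≤ C₀ := by
      intro x hx
      have hx1 : (n:ℝ) * h < x := lt_of_lt_of_le hnh hx.1
      have ihx := ih (p-1) h x (by linarith) hh hx1
      have hmono : (x - n * h) ^ ((p-1) - n) ≤ ((t - h) - n * h) ^ ((p-1) - n) := by
        apply Real.rpow_le_rpow_of_nonpos hposbase (by linarith [hx.1]) (by push_cast; linarith)
      have hprodnn : 0 ≤ (∏ j ∈ Finset.range n, (-(p-1) + j)) * h ^ n := by
        apply mul_nonneg (Finset.prod_nonneg fun j _ => by have := Nat.cast_nonneg (α := ℝ) j; linarith) (by positivity)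
      rw [norm_mul, Real.norm_eq_abs, Real.norm_eq_abs, abs_of_nonpos hp, hC₀]
      apply mul_le_mul_of_nonneg_left _ (by linarith)
      calc |Sfun n (p-1) h x| ≤ (∏ j ∈ Finset.range n, (-(p-1) + j)) * h ^ n * (x - n*h) ^ ((p-1) - n) := ihx
        _ ≤ _ := by apply mul_le_mul_of_nonneg_left hmono hprodnn
    have key := Convex.norm_image_sub_le_of_norm_hasDerivWithin_le hder hbd (convex_Icc _ _)
      (Set.mem_Icc.mpr ⟨le_refl _, by linarith⟩) (Set.mem_Icc.mpr ⟨by linarith, le_refl _⟩)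
    rw [Real.norm_eq_abs, Real.norm_eq_abs] at key
    have habs : |t - (t - h)| = h := by rw [abs_of_nonneg (by linarith)]; ring
    rw [habs] at key
    refine le_trans key (le_of_eq ?_)
    rw [hC₀, Finset.prod_range_succ' (fun j => (-p + (j:ℝ))) n]
    have e1 : ∀ j : ℕ, -(p-1) + (j:ℝ) = -p + ((j:ℕ)+1 : ℕ) := by intro j; push_cast; ring
    have e2 : (t - h) - (n:ℝ) * h = t - ((n:ℕ)+1 : ℕ) * h := by push_cast; ring
    have e3 : (p - 1) - (n:ℝ) = p - ((n:ℕ)+1 : ℕ) := by push_cast; ring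
    rw [Finset.prod_congr rfl (fun j _ => e1 j), e2, e3]
    push_cast
    ring

/-- bounds on the kernel
`g_{r²}(t) = Σ_{k=0}^m C(m,k)(−1)^k χ_{t>kr²}/√(t−kr²)` : there is `C > 0` depending
only on `m` such that `|g_{r²}(t)| ≤ C/√(t−kr²)` for `kr² < t ≤ (k+1)r² ≤ (m+1)r²`,
and `|g_{r²}(t)| ≤ C r^{2m} t^{−m−1/2}` for `t > (m+1)r²`. -/
theorem stmt11 (m : ℕ) (hm : 1 ≤ m) :
    ∃ C : ℝ, 0 < C ∧ ∀ r : ℝ, 0 < r →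
      ∀ g : ℝ → ℝ,
        (g = fun t => ∑ k ∈ Finset.range (m + 1), (m.choose k : ℝ) * (-1) ^ k *
          (if (k : ℝ) * r ^ 2 < t then 1 / Real.sqrt (t - (k : ℝ) * r ^ 2) else 0)) →
        (∀ k : ℕ, k ≤ m → ∀ t : ℝ, (k : ℝ) * r ^ 2 < t → t ≤ ((k : ℝ) + 1) * r ^ 2 →
          |g t| ≤ C / Real.sqrt (t - (k : ℝ) * r ^ 2)) ∧
        (∀ t : ℝ, ((m : ℝ) + 1) * r ^ 2 < t →
          |g t| ≤ C * r ^ (2 * (m : ℝ)) * t ^ (-(m : ℝ) - 1 / 2)) := by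
  set P : ℝ := ∏ j ∈ Finset.range m, ((1:ℝ)/2 + j) with hP
  have hPpos : 0 < P := Finset.prod_pos fun j _ => by positivity
  refine ⟨2 ^ m + P * ((m:ℝ)+1) ^ (m+1), by positivity, ?_⟩
  intro r hr g hg
  have hr2 : (0:ℝ) < r ^ 2 := by positivity
  constructor
  · -- near-diagonal bound
    intro k hk t hkt htk
    have hst : 0 < t - (k:ℝ) * r ^ 2 := by linarith
    have hsq : 0 < Real.sqrt (t - (k:ℝ) * r ^ 2) := Real.sqrt_pos.mpr hst
    have step : |g t| ≤ (2:ℝ) ^ m * (1 / Real.sqrt (t - (k:ℝ) * r ^ 2)) := by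
      rw [hg]
      calc |∑ j ∈ Finset.range (m + 1), (m.choose j : ℝ) * (-1) ^ j *
            (if (j : ℝ) * r ^ 2 < t then 1 / Real.sqrt (t - (j : ℝ) * r ^ 2) else 0)|
          ≤ ∑ j ∈ Finset.range (m + 1), |(m.choose j : ℝ) * (-1) ^ j *
            (if (j : ℝ) * r ^ 2 < t then 1 / Real.sqrt (t - (j : ℝ) * r ^ 2) else 0)| :=
            Finset.abs_sum_le_sum_abs _ _
        _ ≤ ∑ j ∈ Finset.range (m + 1), (m.choose j : ℝ) *
              (1 / Real.sqrt (t - (k:ℝ) * r ^ 2)) := by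
            apply Finset.sum_le_sum
            intro j hj
            rw [abs_mul, abs_mul, abs_pow, abs_neg, abs_one, one_pow, mul_one,
              Nat.abs_cast]
            by_cases hjk : (j:ℝ) * r ^ 2 < t
            · rw [if_pos hjk, abs_of_nonneg (by positivity)]
              apply mul_le_mul_of_nonneg_left _ (Nat.cast_nonneg _)
              apply one_div_le_one_div_of_le hsq
              apply Real.sqrt_le_sqrt
              have hjlt : (j:ℝ) < (k:ℝ) + 1 := by nlinarith
              have hjk2 : (j:ℝ) ≤ (k:ℝ) := by
                have h' : j < k + 1 := by exact_mod_cast hjlt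
                exact_mod_cast Nat.lt_succ_iff.mp h'
              nlinarith
            · rw [if_neg hjk, abs_zero, mul_zero]
              positivity
        _ = (2:ℝ) ^ m * (1 / Real.sqrt (t - (k:ℝ) * r ^ 2)) := by
            rw [← Finset.sum_mul]
            congr 1
            rw [← Nat.cast_sum, Nat.sum_range_choose]
            push_cast; ring
    refine le_trans step ?_
    rw [one_div, div_eq_mul_inv]
    apply mul_le_mul_of_nonneg_right _ (by positivity)
    nlinarith [mul_pos hPpos (pow_pos (show (0:ℝ) < (m:ℝ)+1 by positivity) (m+1))]
  · -- far bound
    intro t ht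
    have hmt : (m:ℝ) * r ^ 2 < t := by nlinarith
    have hgS : g t = Sfun m (-(1/2)) (r ^ 2) t := by
      rw [hg]
      unfold Sfun
      apply Finset.sum_congr rfl
      intro j hj
      have hj' : (j:ℝ) ≤ m := by
        exact_mod_cast Nat.lt_succ_iff.mp (Finset.mem_range.mp hj)
      have hjt : (j:ℝ) * r ^ 2 < t := by nlinarith
      rw [if_pos hjt]
      have hpos : 0 < t - (j:ℝ) * r ^ 2 := by linarith
      rw [one_div, Real.sqrt_eq_rpow, ← Real.rpow_neg (le_of_lt hpos)]
    rw [hgS]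
    have hkey := keyA m (-(1/2)) (r ^ 2) t (by norm_num) hr2 hmt
    have hPeq : (∏ j ∈ Finset.range m, (-(-(1/2:ℝ)) + j)) = P := by
      apply Finset.prod_congr rfl; intro j _; norm_num
    rw [hPeq] at hkey
    refine le_trans hkey ?_
    -- now pure inequality of positive reals
    set q : ℝ := -(m:ℝ) - 1/2 with hq
    have hqe : -(1/2:ℝ) - (m:ℝ) = q := by rw [hq]; ring
    rw [hqe]
    have htpos : 0 < t := by nlinarith
    have hm1 : (0:ℝ) < (m:ℝ) + 1 := by positivity
    have hbase : 0 < t / ((m:ℝ)+1) := by positivity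
    have hb2 : t / ((m:ℝ)+1) ≤ t - (m:ℝ) * r ^ 2 := by
      rw [div_le_iff₀ hm1]
      nlinarith
    have hA : (t - (m:ℝ) * r ^ 2) ^ q ≤ (t / ((m:ℝ)+1)) ^ q :=
      Real.rpow_le_rpow_of_nonpos hbase hb2 (by rw [hq]; push_cast; nlinarith [Nat.cast_nonneg (α := ℝ) m])
    have hB : (t / ((m:ℝ)+1)) ^ q = ((m:ℝ)+1) ^ (-q) * t ^ q := by
      rw [Real.div_rpow (le_of_lt htpos) (le_of_lt hm1), Real.rpow_neg (le_of_lt hm1)]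
      rw [div_eq_mul_inv, mul_comm]
    have hC : ((m:ℝ)+1) ^ (-q) ≤ ((m:ℝ)+1) ^ (m+1) := by
      rw [← Real.rpow_natCast ((m:ℝ)+1) (m+1)]
      apply Real.rpow_le_rpow_of_exponent_le (by push_cast; linarith [Nat.cast_nonneg (α := ℝ) m])
      rw [hq]; push_cast; linarith
    have hD : (r ^ 2) ^ m = r ^ (2 * (m:ℝ)) := by
      rw [← pow_mul, ← Real.rpow_natCast r (2 * m)]
      push_cast; ring_nf
    rw [hD]
    have htq : 0 < t ^ q := Real.rpow_pos_of_pos htpos q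
    have hrm : 0 < r ^ (2 * (m:ℝ)) := Real.rpow_pos_of_pos hr _
    calc P * r ^ (2*(m:ℝ)) * (t - (m:ℝ) * r ^ 2) ^ q
        ≤ P * r ^ (2*(m:ℝ)) * ((t / ((m:ℝ)+1)) ^ q) := by
          apply mul_le_mul_of_nonneg_left hA (by positivity)
      _ = P * ((m:ℝ)+1) ^ (-q) * r ^ (2*(m:ℝ)) * t ^ q := by rw [hB]; ring
      _ ≤ (2 ^ m + P * ((m:ℝ)+1) ^ (m+1)) * r ^ (2*(m:ℝ)) * t ^ q := by
          apply mul_le_mul_of_nonneg_right _ (le_of_lt htq)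
          apply mul_le_mul_of_nonneg_right _ (le_of_lt hrm)
          have h2m : (0:ℝ) ≤ 2 ^ m := by positivity
          nlinarith [mul_le_mul_of_nonneg_left hC (le_of_lt hPpos)]
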